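/- (Lemma 6.9, continued: free convolution preserves bounded densities) Let μ, ν be compactly supported probability measures on ℝ and suppose μ is absolutely continuous with respect to Lebesgue measure with density bounded by M. Let (m, S_μ, S_ν) be the subordination triple for (μ, ν), and let ρ be a probability measure on ℝ whose Stieltjes transform equals m on ℂ⁺ (i.e. ρ = μ ⊞ ν). Then ρ is absolutely continuous with respect to Lebesgue measure with density bounded by M. -/

import Mathlib

open MeasureTheory

noncomputable section

/-- The Stieltjes transform `m_μ(z) = ∫ (t − z)⁻¹ dμ(t)` of a measure on `ℝ`. -/
def stP (μ : Measure ℝ) (z : ℂ) : ℂ := ∫ t, ((t : ℂ) - z)⁻¹ ∂μ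

/-- The Stieltjes transform of a finite signed measure on `ℝ`. -/
def stS (ν : SignedMeasure ℝ) (z : ℂ) : ℂ :=
  stP ν.toJordanDecomposition.posPart z - stP ν.toJordanDecomposition.negPart z

/-- The symmetrization `μ^s(X) = (μ(X) + μ(−X))/2` of a measure on `ℝ`. -/
def symmM (μ : Measure ℝ) : Measure ℝ :=
  (2 : ENNReal)⁻¹ • (μ + Measure.map (fun x : ℝ => -x) μ)

/-- A measure on `ℝ` is compactly supported. -/
def HasCompactSupportM (μ : Measure ℝ) : Prop := ∃ R : ℝ, μ {x : ℝ | R < |x|} = 0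

/-- `(m, Sμ, Sν)` is the subordination triple for the pair `(μ, ν)` of compactly supported
probability measures on `ℝ`: the three functions are analytic on `ℂ⁺`, satisfy the
subordination system, the prescribed asymptotics as `|z| → ∞`, and `Sμ, Sν` take values
in the closed upper half-plane.  Such a triple exists and is unique, and `m` is the
Stieltjes transform of the free convolution `μ ⊞ ν`. -/
structure IsSubTriple (μ ν : Measure ℝ) (m Sμ Sν : ℂ → ℂ) : Prop where
  diff_m : DifferentiableOn ℂ m {z : ℂ | 0 < z.im}
  diff_Sμ : DifferentiableOn ℂ Sμ {z : ℂ | 0 < z.im}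
  diff_Sν : DifferentiableOn ℂ Sν {z : ℂ | 0 < z.im}
  eq1 : ∀ z : ℂ, 0 < z.im → m z = stP μ (z + Sν z)
  eq2 : ∀ z : ℂ, 0 < z.im → m z = stP ν (z + Sμ z)
  eq3 : ∀ z : ℂ, 0 < z.im → -(z + (m z)⁻¹) = Sμ z + Sν z
  asympt_m : ∃ C R : ℝ, ∀ z : ℂ, 0 < z.im → R ≤ ‖z‖ →
      ‖m z + z⁻¹‖ ≤ C / ‖z‖ ^ 2
  asympt_S : ∃ C R : ℝ, ∀ z : ℂ, 0 < z.im → R ≤ ‖z‖ →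
      ‖Sμ z‖ + ‖Sν z‖ ≤ C
  im_Sμ : ∀ z : ℂ, 0 < z.im → 0 ≤ (Sμ z).im
  im_Sν : ∀ z : ℂ, 0 < z.im → 0 ≤ (Sν z).im

/-- `κ_{μ,ν}(z)`, defined from the subordination functions `Sμ, Sν`. -/
def kappaF (μ ν : Measure ℝ) (Sμ Sν : ℂ → ℂ) (z : ℂ) : ℂ :=
  (deriv (stP μ) (z + Sν z) + deriv (stP ν) (z + Sμ z)) * ((z + Sμ z + Sν z) ^ 2)⁻¹
    - deriv (stP μ) (z + Sν z) * deriv (stP ν) (z + Sμ z)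

/-- `α_{μ,ν}(z)`. -/
def alphaF (μ ν : Measure ℝ) (Sμ Sν : ℂ → ℂ) (z : ℂ) : ℝ :=
  ((‖z + Sμ z + Sν z‖ ^ 2)⁻¹ + ‖deriv (stP μ) (z + Sν z)‖
      + ‖deriv (stP ν) (z + Sμ z)‖) / ‖kappaF μ ν Sμ Sν z‖

/-- `β_{μ,ν}(z)`. -/
def betaF (μ ν : Measure ℝ) (Sμ Sν : ℂ → ℂ) (z : ℂ) : ℝ :=
  (‖z + Sμ z + Sν z‖ ^ 3)⁻¹
    + ‖deriv (deriv (stP μ)) (z + Sν z)‖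
    + ‖deriv (deriv (stP ν)) (z + Sμ z)‖

/-- The singular values of an `N × N` complex matrix: the square roots of the eigenvalues
of the Hermitian matrix `Mᴴ M`. -/
def singVal {N : ℕ} (M : Matrix (Fin N) (Fin N) ℂ) (i : Fin N) : ℝ :=
  Real.sqrt ((Matrix.isHermitian_conjTranspose_mul_self M).eigenvalues i)

/-- The empirical singular value distribution `ν_M = N⁻¹ ∑ δ_{s_i}`. -/
def empSV {N : ℕ} (M : Matrix (Fin N) (Fin N) ℂ) : Measure ℝ :=
  ((N : ENNReal))⁻¹ • ∑ i : Fin N, Measure.dirac (singVal M i)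

section Helpers
open Real Filter Set Topology

lemma poisson_cont (x η : ℝ) (hη : 0 < η) :
    Continuous fun t : ℝ => η / ((t - x) ^ 2 + η ^ 2) := by
  apply continuous_const.div (by continuity)
  intro t; positivity

lemma poisson_nonneg (x η : ℝ) (hη : 0 < η) (t : ℝ) :
    0 ≤ η / ((t - x) ^ 2 + η ^ 2) := by positivity

lemma poisson_le (x η : ℝ) (hη : 0 < η) (t : ℝ) :
    η / ((t - x) ^ 2 + η ^ 2) ≤ η⁻¹ := by
  rw [div_le_iff₀ (by positivity)]
  nlinarith [sq_nonneg (t - x), inv_pos.2 hη, mul_inv_cancel₀ hη.ne',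
    mul_nonneg (sq_nonneg (t - x)) (inv_pos.2 hη).le]

lemma poisson_im (t x η : ℝ) :
    (((t : ℂ) - ((x : ℂ) + (η : ℂ) * Complex.I))⁻¹).im = η / ((t - x) ^ 2 + η ^ 2) := by
  rw [Complex.inv_im]
  have h1 : ((t : ℂ) - ((x : ℂ) + (η : ℂ) * Complex.I)).im = -η := by simp
  have h2 : ((t : ℂ) - ((x : ℂ) + (η : ℂ) * Complex.I)).re = t - x := by simp
  rw [Complex.normSq_apply, h1, h2]
  ring_nf

lemma integrable_inv_sub (ρ : Measure ℝ) [IsFiniteMeasure ρ] (w : ℂ) (hw : 0 < w.im) :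
    Integrable (fun t : ℝ => ((t : ℂ) - w)⁻¹) ρ := by
  have hne : ∀ t : ℝ, (t : ℂ) - w ≠ 0 := by
    intro t h
    rw [sub_eq_zero] at h
    have : w.im = 0 := by rw [← h]; simp
    linarith
  have hcont : Continuous fun t : ℝ => ((t : ℂ) - w)⁻¹ :=
    ((Complex.continuous_ofReal.sub continuous_const)).inv₀ hne
  refine (integrable_const (w.im)⁻¹).mono' hcont.aestronglyMeasurable ?_
  refine ae_of_all _ fun t => ?_
  rw [norm_inv]
  have h1 : w.im ≤ ‖(t : ℂ) - w‖ := by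
    have := Complex.abs_im_le_norm ((t : ℂ) - w)
    have h2 : ((t : ℂ) - w).im = -w.im := by simp
    rw [h2, abs_neg, abs_of_pos hw] at this
    exact this
  exact inv_anti₀ hw h1

lemma poisson_eq (x η : ℝ) (hη : 0 < η) :
    (fun t : ℝ => η / ((t - x) ^ 2 + η ^ 2))
      = fun t : ℝ => η⁻¹ * (1 + ((t - x) / η) ^ 2)⁻¹ := by
  funext t
  rw [div_pow]
  rw [inv_eq_one_div, inv_eq_one_div]
  field_simp
  ring

lemma poisson_integrable (x η : ℝ) (hη : 0 < η) :
    Integrable (fun t : ℝ => η / ((t - x) ^ 2 + η ^ 2)) := by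
  rw [poisson_eq x η hη]
  apply Integrable.const_mul
  have h1 : Integrable (fun t : ℝ => (1 + (t / η) ^ 2)⁻¹) :=
    integrable_inv_one_add_sq.comp_div hη.ne'
  exact h1.comp_sub_right x

lemma poisson_integral (x η : ℝ) (hη : 0 < η) :
    ∫ t : ℝ, η / ((t - x) ^ 2 + η ^ 2) = π := by
  rw [poisson_eq x η hη]
  rw [MeasureTheory.integral_const_mul]
  have h1 : ∫ t : ℝ, (1 + ((t - x) / η) ^ 2)⁻¹
      = ∫ t : ℝ, (1 + (t / η) ^ 2)⁻¹ :=
    integral_sub_right_eq_self (fun s : ℝ => (1 + (s / η) ^ 2)⁻¹) x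
  rw [h1, Measure.integral_comp_div (fun s : ℝ => (1 + s ^ 2)⁻¹) η,
    integral_univ_inv_one_add_sq, smul_eq_mul, abs_of_pos hη]
  field_simp

lemma poisson_lintegral (x η : ℝ) (hη : 0 < η) :
    ∫⁻ t : ℝ, ENNReal.ofReal (η / ((t - x) ^ 2 + η ^ 2)) = ENNReal.ofReal π := by
  rw [← ofReal_integral_eq_lintegral_ofReal (poisson_integrable x η hη)
    (ae_of_all _ fun t => by positivity), poisson_integral x η hη]

lemma poisson_interval_integral (a b t η : ℝ) (hη : 0 < η) :
    ∫ x in a..b, η / ((t - x) ^ 2 + η ^ 2)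
      = arctan ((b - t) / η) - arctan ((a - t) / η) := by
  have heq : ∀ x : ℝ, η / ((t - x) ^ 2 + η ^ 2) = η⁻¹ * (1 + ((x - t) / η) ^ 2)⁻¹ := by
    intro x
    have h1 : (t - x) ^ 2 = (x - t) ^ 2 := by ring
    rw [h1]
    have := congrFun (poisson_eq t η hη) x
    simpa using this
  simp_rw [heq]
  rw [intervalIntegral.integral_const_mul]
  have h2 : ∫ x in a..b, (1 + ((x - t) / η) ^ 2)⁻¹
      = ∫ x in a - t..b - t, (1 + (x / η) ^ 2)⁻¹ :=
    intervalIntegral.integral_comp_sub_right (fun y : ℝ => (1 + (y / η) ^ 2)⁻¹) t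
  rw [h2, intervalIntegral.integral_comp_div (fun y : ℝ => (1 + y ^ 2)⁻¹) hη.ne',
    integral_inv_one_add_sq, smul_eq_mul]
  field_simp

lemma poisson_integrable_finite (ρ : Measure ℝ) [IsFiniteMeasure ρ] (x η : ℝ) (hη : 0 < η) :
    Integrable (fun t : ℝ => η / ((t - x) ^ 2 + η ^ 2)) ρ := by
  refine (integrable_const η⁻¹).mono' (poisson_cont x η hη).aestronglyMeasurable ?_
  refine ae_of_all _ fun t => ?_
  rw [Real.norm_eq_abs, abs_of_nonneg (by positivity)]
  exact poisson_le x η hη t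

/-- imaginary part of the Stieltjes transform as a Poisson integral -/
lemma im_stP (ρ : Measure ℝ) [IsFiniteMeasure ρ] (w : ℂ) (hw : 0 < w.im) :
    (stP ρ w).im = ∫ t, w.im / ((t - w.re) ^ 2 + w.im ^ 2) ∂ρ := by
  have h0 := integral_im (integrable_inv_sub ρ w hw)
  simp only [← RCLike.im_eq_complex_im] at *
  rw [stP, ← h0]
  congr 1
  funext t
  simp only [RCLike.im_eq_complex_im]
  have h := poisson_im t w.re w.im
  rw [Complex.re_add_im] at h
  exact h

lemma lintegral_poisson_eq_ofReal_im (ρ : Measure ℝ) [IsFiniteMeasure ρ] (w : ℂ)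
    (hw : 0 < w.im) :
    ∫⁻ t, ENNReal.ofReal (w.im / ((t - w.re) ^ 2 + w.im ^ 2)) ∂ρ
      = ENNReal.ofReal ((stP ρ w).im) := by
  rw [im_stP ρ w hw,
    ofReal_integral_eq_lintegral_ofReal (poisson_integrable_finite ρ w.re w.im hw)
      (ae_of_all _ fun t => by positivity)]

/-- Step A: lintegral of Poisson kernel against a measure with bounded density. -/
lemma lintegral_poisson_le (μ : Measure ℝ) [IsFiniteMeasure μ] (M : ℝ) (hM : 0 < M)
    (hac : μ ≪ (volume : Measure ℝ))
    (hbd : ∀ᵐ x ∂(volume : Measure ℝ), μ.rnDeriv volume x ≤ ENNReal.ofReal M)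
    (x η : ℝ) (hη : 0 < η) :
    ∫⁻ t, ENNReal.ofReal (η / ((t - x) ^ 2 + η ^ 2)) ∂μ ≤ ENNReal.ofReal (π * M) := by
  have hμ : volume.withDensity (μ.rnDeriv volume) = μ :=
    Measure.withDensity_rnDeriv_eq μ volume hac
  have hmeas : Measurable fun t : ℝ => ENNReal.ofReal (η / ((t - x) ^ 2 + η ^ 2)) :=
    ENNReal.measurable_ofReal.comp (poisson_cont x η hη).measurable
  calc ∫⁻ t, ENNReal.ofReal (η / ((t - x) ^ 2 + η ^ 2)) ∂μ
      = ∫⁻ t, μ.rnDeriv volume t * ENNReal.ofReal (η / ((t - x) ^ 2 + η ^ 2)) ∂volume := by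
        conv_lhs => rw [← hμ]
        rw [lintegral_withDensity_eq_lintegral_mul _ (μ.measurable_rnDeriv volume) hmeas]
        rfl
    _ ≤ ∫⁻ t, ENNReal.ofReal M * ENNReal.ofReal (η / ((t - x) ^ 2 + η ^ 2)) ∂volume := by
        refine lintegral_mono_ae ?_
        filter_upwards [hbd] with t ht
        exact mul_le_mul_left ht _
    _ = ENNReal.ofReal M * ∫⁻ t, ENNReal.ofReal (η / ((t - x) ^ 2 + η ^ 2)) ∂volume :=
        lintegral_const_mul _ hmeas
    _ = ENNReal.ofReal M * ENNReal.ofReal π := by rw [poisson_lintegral x η hη]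
    _ = ENNReal.ofReal (π * M) := by
        rw [← ENNReal.ofReal_mul hM.le, mul_comm]

/-- Step B': from the bound on `Im (stP ρ)` to the Poisson lintegral bound. -/
lemma rho_poisson_le (ρ : Measure ℝ) [IsFiniteMeasure ρ] (M : ℝ) (hM : 0 < M)
    (hbound : ∀ w : ℂ, 0 < w.im → (stP ρ w).im ≤ π * M)
    (x η : ℝ) (hη : 0 < η) :
    ∫⁻ t, ENNReal.ofReal (η / ((t - x) ^ 2 + η ^ 2)) ∂ρ ≤ ENNReal.ofReal (π * M) := by
  set w : ℂ := (x : ℂ) + (η : ℂ) * Complex.I with hwdef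
  have hre : w.re = x := by simp [hwdef]
  have him : w.im = η := by simp [hwdef]
  have hw : 0 < w.im := by rw [him]; exact hη
  have h1 := lintegral_poisson_eq_ofReal_im ρ w hw
  rw [hre, him] at h1
  rw [h1]
  exact ENNReal.ofReal_le_ofReal (hbound w hw)

lemma poisson_cont_x (t η : ℝ) (hη : 0 < η) :
    Continuous fun x : ℝ => η / ((t - x) ^ 2 + η ^ 2) := by
  apply continuous_const.div (by continuity)
  intro x; positivity

lemma poisson_interval_lintegral (a b t η : ℝ) (hη : 0 < η) (hab : a ≤ b) :
    ∫⁻ x in Ioc a b, ENNReal.ofReal (η / ((t - x) ^ 2 + η ^ 2))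
      = ENNReal.ofReal (arctan ((b - t) / η) - arctan ((a - t) / η)) := by
  rw [← ofReal_integral_eq_lintegral_ofReal
    ((poisson_cont_x t η hη).integrableOn_Ioc) (ae_of_all _ fun x => by positivity)]
  rw [← intervalIntegral.integral_of_le hab, poisson_interval_integral a b t η hη]

/-- Step C: bound on the measure of open intervals. -/
lemma interval_bound (ρ : Measure ℝ) [IsProbabilityMeasure ρ] (M : ℝ) (hM : 0 < M)
    (hbound : ∀ x η : ℝ, 0 < η →
      ∫⁻ t, ENNReal.ofReal (η / ((t - x) ^ 2 + η ^ 2)) ∂ρ ≤ ENNReal.ofReal (π * M))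
    (a b : ℝ) : ρ (Ioo a b) ≤ ENNReal.ofReal (M * (b - a)) := by
  rcases le_or_gt b a with hba | hab
  · rw [Ioo_eq_empty (by exact fun h => absurd hba (not_le.2 h))]
    simp
  -- a < b
  set η : ℕ → ℝ := fun n => ((n : ℝ) + 1)⁻¹ with hηdef
  have hηpos : ∀ n, 0 < η n := fun n => by positivity
  set g : ℕ → ℝ → ℝ := fun n t => arctan ((b - t) / η n) - arctan ((a - t) / η n) with hgdef
  have hgcont : ∀ n, Continuous (g n) := by
    intro n
    apply Continuous.sub <;>
      exact Real.continuous_arctan.comp ((continuous_const.sub continuous_id).div_const _)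
  have hgmeas : ∀ n, Measurable fun t => ENNReal.ofReal (g n t) :=
    fun n => ENNReal.measurable_ofReal.comp (hgcont n).measurable
  -- per-n bound
  have step : ∀ n, ∫⁻ t, ENNReal.ofReal (g n t) ∂ρ
      ≤ ENNReal.ofReal (π * M) * ENNReal.ofReal (b - a) := by
    intro n
    have hswap : ∫⁻ t, ∫⁻ x in Ioc a b,
          ENNReal.ofReal (η n / ((t - x) ^ 2 + (η n) ^ 2)) ∂volume ∂ρ
        = ∫⁻ x in Ioc a b, ∫⁻ t,
          ENNReal.ofReal (η n / ((t - x) ^ 2 + (η n) ^ 2)) ∂ρ ∂volume := by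
      apply lintegral_lintegral_swap
      apply Measurable.aemeasurable
      apply ENNReal.measurable_ofReal.comp
      apply Measurable.div measurable_const
      exact ((measurable_fst.sub measurable_snd).pow_const 2).add measurable_const
    calc ∫⁻ t, ENNReal.ofReal (g n t) ∂ρ
        = ∫⁻ t, ∫⁻ x in Ioc a b,
            ENNReal.ofReal (η n / ((t - x) ^ 2 + (η n) ^ 2)) ∂volume ∂ρ := by
          refine lintegral_congr fun t => ?_
          rw [poisson_interval_lintegral a b t (η n) (hηpos n) hab.le]
      _ = ∫⁻ x in Ioc a b, ∫⁻ t,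
            ENNReal.ofReal (η n / ((t - x) ^ 2 + (η n) ^ 2)) ∂ρ ∂volume := hswap
      _ ≤ ∫⁻ _x in Ioc a b, ENNReal.ofReal (π * M) ∂volume :=
          lintegral_mono fun x => hbound x (η n) (hηpos n)
      _ = ENNReal.ofReal (π * M) * ENNReal.ofReal (b - a) := by
          rw [setLIntegral_const, Real.volume_Ioc]
  -- pointwise limit on Ioo a b
  have hlim : ∀ t ∈ Ioo a b,
      Tendsto (fun n => ENNReal.ofReal (g n t)) atTop (𝓝 (ENNReal.ofReal π)) := by
    intro t ht
    have hnat : Tendsto (fun n : ℕ => (n : ℝ) + 1) atTop atTop :=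
      tendsto_atTop_add_const_right _ 1 tendsto_natCast_atTop_atTop
    have h1 : Tendsto (fun n => (b - t) / η n) atTop atTop := by
      simp only [hηdef, div_inv_eq_mul]
      exact hnat.const_mul_atTop (by linarith [ht.2] : (0:ℝ) < b - t)
    have h2 : Tendsto (fun n => (a - t) / η n) atTop atBot := by
      simp only [hηdef, div_inv_eq_mul]
      exact hnat.const_mul_atTop_of_neg (by linarith [ht.1] : a - t < 0)
    have h3 : Tendsto (fun n => arctan ((b - t) / η n)) atTop (𝓝 (π / 2)) :=
      (Real.tendsto_arctan_atTop.mono_right nhdsWithin_le_nhds).comp h1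
    have h4 : Tendsto (fun n => arctan ((a - t) / η n)) atTop (𝓝 (-(π / 2))) :=
      (Real.tendsto_arctan_atBot.mono_right nhdsWithin_le_nhds).comp h2
    have h5 : Tendsto (fun n => g n t) atTop (𝓝 π) := by
      have := h3.sub h4
      simpa [hgdef] using this
    exact (ENNReal.continuous_ofReal.tendsto π).comp h5
  -- Fatou
  have fatou : ENNReal.ofReal π * ρ (Ioo a b)
      ≤ ENNReal.ofReal (π * M) * ENNReal.ofReal (b - a) := by
    have h1 : ENNReal.ofReal π * ρ (Ioo a b)
        = ∫⁻ t, (Ioo a b).indicator (fun _ => ENNReal.ofReal π) t ∂ρ := by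
      rw [lintegral_indicator measurableSet_Ioo _, setLIntegral_const]
    rw [h1]
    have h2 : ∫⁻ t, (Ioo a b).indicator (fun _ => ENNReal.ofReal π) t ∂ρ
        ≤ ∫⁻ t, liminf (fun n => ENNReal.ofReal (g n t)) atTop ∂ρ := by
      refine lintegral_mono fun t => ?_
      by_cases ht : t ∈ Ioo a b
      · rw [indicator_of_mem ht]
        exact ((hlim t ht).liminf_eq).symm.le
      · rw [indicator_of_notMem ht]
        exact zero_le
    refine h2.trans ((lintegral_liminf_le hgmeas).trans ?_)
    exact (liminf_le_liminf (Eventually.of_forall step)).trans_eq (liminf_const _)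
  -- cancel π
  have hπ : ENNReal.ofReal (π * M) * ENNReal.ofReal (b - a)
      = ENNReal.ofReal π * ENNReal.ofReal (M * (b - a)) := by
    rw [← ENNReal.ofReal_mul pi_pos.le, ← ENNReal.ofReal_mul (by positivity), mul_assoc]
  rw [hπ] at fatou
  have hπ0 : (ENNReal.ofReal π) ≠ 0 := (ENNReal.ofReal_pos.2 pi_pos).ne'
  exact (ENNReal.mul_le_mul_iff_right hπ0 ENNReal.ofReal_ne_top).1 fatou

/-- From the open-interval bound to the `Ioc` bound. -/
lemma ioc_bound (ρ : Measure ℝ) [IsProbabilityMeasure ρ] (M : ℝ) (hM : 0 < M)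
    (h : ∀ a b : ℝ, ρ (Ioo a b) ≤ ENNReal.ofReal (M * (b - a)))
    (a b : ℝ) : ρ (Ioc a b) ≤ ENNReal.ofReal (M * (b - a)) := by
  rcases le_or_gt b a with hba | hab
  · rw [Ioc_eq_empty (not_lt.2 hba)]; simp
  refine ENNReal.le_of_forall_pos_le_add fun ε hε _ => ?_
  set δ : ℝ := (ε : ℝ) / (2 * M) with hδdef
  have hδ : 0 < δ := by positivity
  have hsub : Ioc a b ⊆ Ioo (a - δ) (b + δ) := fun x hx =>
    ⟨by linarith [hx.1], by linarith [hx.2]⟩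
  calc ρ (Ioc a b) ≤ ρ (Ioo (a - δ) (b + δ)) := measure_mono hsub
    _ ≤ ENNReal.ofReal (M * (b + δ - (a - δ))) := h _ _
    _ = ENNReal.ofReal (M * (b - a) + M * (2 * δ)) := by ring_nf
    _ ≤ ENNReal.ofReal (M * (b - a)) + ENNReal.ofReal (M * (2 * δ)) :=
        ENNReal.ofReal_add_le
    _ = ENNReal.ofReal (M * (b - a)) + ε := by
        congr 1
        have : M * (2 * δ) = (ε : ℝ) := by
          rw [hδdef]; field_simp
        rw [this, ENNReal.ofReal_coe_nnreal]

/-- Covering lemma: a measure dominated on `Ioc` intervals is dominated by `c • volume`. -/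
lemma le_smul_volume_of_Ioc (ρ : Measure ℝ) (c : ENNReal) (hc0 : c ≠ 0) (hct : c ≠ ⊤)
    (h : ∀ a b : ℝ, ρ (Ioc a b) ≤ c * ENNReal.ofReal (b - a)) (s : Set ℝ) :
    ρ s ≤ c * volume s := by
  have key : ∀ t : Set ℝ, c⁻¹ * ρ t ≤ StieltjesFunction.id.length t := by
    intro t
    rw [StieltjesFunction.length_eq]
    refine le_iInf fun a => le_iInf fun b => le_iInf fun hab => ?_
    calc c⁻¹ * ρ t ≤ c⁻¹ * ρ (Ioc a b) := mul_le_mul_right (measure_mono (fun x hx => hab ⟨hx, fun h => (sub_one_lt x).not_ge (h (x - 1))⟩)) _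
      _ ≤ c⁻¹ * (c * ENNReal.ofReal (b - a)) := mul_le_mul_right (h a b) _
      _ = ENNReal.ofReal ((StieltjesFunction.id) b - (StieltjesFunction.id) a) := by
          rw [← mul_assoc, ENNReal.inv_mul_cancel hc0 hct, one_mul]
          rfl
  have hvol : volume s = StieltjesFunction.id.outer s := by
    rw [Real.volume_val s, StieltjesFunction.measure]
    rfl
  have main : c⁻¹ * ρ s ≤ StieltjesFunction.id.outer s := by
    rw [StieltjesFunction.outer, OuterMeasure.ofFunction_apply]
    refine le_iInf fun t => le_iInf fun hcov => ?_
    calc c⁻¹ * ρ s ≤ c⁻¹ * ρ (⋃ n, t n) := mul_le_mul_right (measure_mono hcov) _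
      _ ≤ c⁻¹ * ∑' n, ρ (t n) := mul_le_mul_right (measure_iUnion_le t) _
      _ = ∑' n, c⁻¹ * ρ (t n) := ENNReal.tsum_mul_left.symm
      _ ≤ ∑' n, StieltjesFunction.id.length (t n) :=
          ENNReal.tsum_le_tsum fun n => key (t n)
  calc ρ s = c * (c⁻¹ * ρ s) := by
        rw [← mul_assoc, ENNReal.mul_inv_cancel hc0 hct, one_mul]
    _ ≤ c * StieltjesFunction.id.outer s := mul_le_mul_right main _
    _ = c * volume s := by rw [hvol]

end Helpers

/-- **Lemma 6.9, continued (free convolution preserves bounded densities).**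
If `μ` has a density bounded by `M` and `ρ = μ ⊞ ν` (characterized by the subordination
triple), then `ρ` has a density bounded by `M`. -/
theorem free_convolution_preserves_bounded_density
    (μ ν : Measure ℝ) (hμp : IsProbabilityMeasure μ) (hνp : IsProbabilityMeasure ν)
    (hμc : HasCompactSupportM μ) (hνc : HasCompactSupportM ν)
    (M : ℝ) (hM : 0 < M)
    (hμd : μ ≪ (volume : Measure ℝ) ∧
      ∀ᵐ x ∂(volume : Measure ℝ), μ.rnDeriv volume x ≤ ENNReal.ofReal M)
    (m Sμ Sν : ℂ → ℂ) (htriple : IsSubTriple μ ν m Sμ Sν)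
    (ρ : Measure ℝ) (hρp : IsProbabilityMeasure ρ)
    (hρm : ∀ z : ℂ, 0 < z.im → stP ρ z = m z) :
    ρ ≪ (volume : Measure ℝ) ∧
      ∀ᵐ x ∂(volume : Measure ℝ), ρ.rnDeriv volume x ≤ ENNReal.ofReal M := by
  obtain ⟨hac, hbd⟩ := hμd
  haveI : IsProbabilityMeasure μ := hμp
  haveI : IsProbabilityMeasure ρ := hρp
  -- Step A/B: the imaginary part of the Stieltjes transform of ρ is bounded by π * M
  have hstμ : ∀ w : ℂ, 0 < w.im → (stP μ w).im ≤ Real.pi * M := by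
    intro w hw
    have h1 := lintegral_poisson_eq_ofReal_im μ w hw
    have h2 := lintegral_poisson_le μ M hM hac hbd w.re w.im hw
    rw [h1] at h2
    exact (ENNReal.ofReal_le_ofReal_iff (by positivity)).1 h2
  have hstρ : ∀ w : ℂ, 0 < w.im → (stP ρ w).im ≤ Real.pi * M := by
    intro w hw
    rw [hρm w hw, htriple.eq1 w hw]
    have him : 0 < (w + Sν w).im := by
      rw [Complex.add_im]
      linarith [htriple.im_Sν w hw]
    exact hstμ _ him
  -- Step C: interval bounds
  have hioo := interval_bound ρ M hM (rho_poisson_le ρ M hM hstρ)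
  have hioc := ioc_bound ρ M hM hioo
  set c : ENNReal := ENNReal.ofReal M with hcdef
  have hc0 : c ≠ 0 := (ENNReal.ofReal_pos.2 hM).ne'
  have hioc' : ∀ a b : ℝ, ρ (Set.Ioc a b) ≤ c * ENNReal.ofReal (b - a) := by
    intro a b
    calc ρ (Set.Ioc a b) ≤ ENNReal.ofReal (M * (b - a)) := hioc a b
      _ = c * ENNReal.ofReal (b - a) := ENNReal.ofReal_mul hM.le
  -- Step D: covering argument
  have hdom : ∀ s : Set ℝ, ρ s ≤ c * volume s :=
    le_smul_volume_of_Ioc ρ c hc0 ENNReal.ofReal_ne_top hioc'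
  constructor
  · refine Measure.AbsolutelyContinuous.mk fun s _hs h0 => ?_
    have h := hdom s
    rw [h0, mul_zero] at h
    exact le_antisymm h zero_le
  · -- Radon–Nikodym derivative bound
    set r : NNReal := Real.toNNReal M with hrdef
    have hr0 : r ≠ 0 := by
      simp only [hrdef, ne_eq, Real.toNNReal_eq_zero, not_le]
      exact hM
    have hrc : (r : ENNReal) = c := rfl
    have hle : ρ ≤ r • (volume : Measure ℝ) := by
      refine Measure.le_iff.2 fun s _hs => ?_
      rw [Measure.coe_nnreal_smul_apply]
      exact hdom s
    have h1 : ρ.rnDeriv (r • volume) ≤ᵐ[(r • (volume : Measure ℝ))] 1 :=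
      Measure.rnDeriv_le_one_of_le hle
    have h1' : ρ.rnDeriv (r • volume) ≤ᵐ[(volume : Measure ℝ)] 1 := by
      rwa [Measure.ae_smul_measure_eq hr0] at h1
    have h2 := Measure.rnDeriv_smul_right' ρ (volume : Measure ℝ) hr0
    filter_upwards [h1', h2] with x hx1 hx2
    rw [hx2] at hx1
    have hx1' : ((r : ENNReal))⁻¹ * ρ.rnDeriv volume x ≤ 1 := by
      rw [← ENNReal.coe_inv hr0]
      simpa [ENNReal.smul_def] using hx1
    have : ρ.rnDeriv volume x ≤ (r : ENNReal) := by
      calc ρ.rnDeriv volume x = (r : ENNReal) * (((r : ENNReal))⁻¹ * ρ.rnDeriv volume x) := by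
            rw [← mul_assoc, ENNReal.mul_inv_cancel (by exact_mod_cast hr0) ENNReal.coe_ne_top,
              one_mul]
        _ ≤ (r : ENNReal) * 1 := mul_le_mul_right hx1' _
        _ = (r : ENNReal) := mul_one _
    rwa [hrc] at this
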